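/- If A ⊆ ℕ is a J-set, then the difference set A - A = {n ∈ ℕ : ∃ a ∈ A, a + n ∈ A} is an IP*-set, i.e., A - A intersects FS(⟨xₙ⟩) for every sequence ⟨xₙ⟩ in ℕ. -/

import Mathlib

/-- A set `A ⊆ ℕ` is a J-set. -/
def JSet (A : Set ℕ) : Prop :=
  ∀ F : Finset (ℕ → ℕ), ∃ (a : ℕ) (H : Finset ℕ), H.Nonempty ∧
    ∀ f ∈ F, a + ∑ n ∈ H, f n ∈ A

/-- The difference set `A - A = {n : ∃ a ∈ A, a + n ∈ A}`. -/
def diffSet (A : Set ℕ) : Set ℕ := {n | ∃ a ∈ A, a + n ∈ A}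

/-- If `A` is a J-set then `A - A` is an IP*-set: it meets `FS(⟨xₙ⟩)`
for every sequence `⟨xₙ⟩` in `ℕ`. -/
theorem jset_diff_ipstar (A : Set ℕ) (hA : JSet A) :
    ∀ x : ℕ → ℕ, ∃ H : Finset ℕ, H.Nonempty ∧ (∑ n ∈ H, x n) ∈ diffSet A := by
  classical
  intro x
  obtain ⟨a, H, hH, hmem⟩ := hA ({fun _ => 0, x} : Finset (ℕ → ℕ))
  refine ⟨H, hH, a, ?_, ?_⟩
  · have := hmem (fun _ => 0) (by simp)
    simpa using this
  · exact hmem x (by simp)
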